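/- arXiv:1805.01341 — 6 statements merged into one kernel-verified Lean document; each statement's English description precedes it below -/
import Mathlib

section
/- Let W be a random variable with distribution μ_k = (1/(1+f(k))) ∏_{i=0}^{k-1} f(i)/(1+f(i)). Then for every bounded function g : ℕ₀ → ℝ, E[f(W)(g(W+1) - g(W)) + g(0) - g(W)] = 0. -/
open Finset Filter Topology

/-- The limiting degree distribution `μ_k = (1/(1+f k)) ∏_{i<k} f i/(1+f i)`. -/
noncomputable def muk (f : ℕ → ℝ) (k : ℕ) : ℝ :=
  (1 / (1 + f k)) * ∏ i ∈ Finset.range k, f i / (1 + f i)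

/-- the Stein operator `𝒜g(k) = f k (g(k+1)-g k) + g 0 - g k`
annihilates `μ` in expectation, for every bounded `g`. -/
theorem stein_annihilates_mu (f : ℕ → ℝ) (hfpos : ∀ k, 0 < f k)
    (hfle : ∀ k, f k ≤ (k : ℝ) + 1)
    (g : ℕ → ℝ) (hg : ∃ M, ∀ k, |g k| ≤ M) :
    ∑' k : ℕ, muk f k * (f k * (g (k + 1) - g k) + g 0 - g k) = 0 := by
  by_cases hsum : Summable (fun k : ℕ => muk f k * (f k * (g (k + 1) - g k) + g 0 - g k))
  · obtain ⟨M, hM⟩ := hg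
    set p : ℕ → ℝ := fun n => ∏ i ∈ Finset.range n, f i / (1 + f i) with hp
    have hf1 : ∀ k, (0:ℝ) < 1 + f k := fun k => by linarith [hfpos k]
    have hpsucc : ∀ n, p (n+1) = p n * (f n / (1 + f n)) := fun n => Finset.prod_range_succ _ _
    have hmu : ∀ k, muk f k = p k - p (k+1) := by
      intro k
      have hpk : p k = ∏ i ∈ Finset.range k, f i / (1 + f i) := rfl
      have key : (1:ℝ)/(1+f k) = 1 - f k/(1+f k) := by
        have h0 := (hf1 k).ne'
        field_simp
        ring
      have e1 : muk f k = p k * (1/(1+f k)) := by rw [muk, ← hpk]; ring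
      rw [e1, key, hpsucc]; ring
    have hfmu : ∀ k, f k * muk f k = p (k+1) := by
      intro k
      have hpk : p k = ∏ i ∈ Finset.range k, f i / (1 + f i) := rfl
      have e1 : f k * muk f k = p k * (f k / (1+f k)) := by
        rw [muk, ← hpk]; ring
      rw [e1, hpsucc]
    set h : ℕ → ℝ := fun n => p n * (g 0 - g n) with hh
    have ht : ∀ k, muk f k * (f k * (g (k + 1) - g k) + g 0 - g k) = h k - h (k+1) := by
      intro k
      have h1 := hmu k
      have h2 := hfmu k
      simp only [hh]
      linear_combination (g (k+1) - g k) * h2 + (g 0 - g k) * h1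
    have hple : ∀ n, p n ≤ 1 / ((n : ℝ) + 1) := by
      intro n
      induction n with
      | zero => simp [hp]
      | succ n ih =>
        rw [hpsucc]
        have hfn := hfpos n
        have hfn1 := hf1 n
        have hfle' := hfle n
        have hfrac : f n / (1 + f n) ≤ ((n:ℝ) + 1) / ((n:ℝ) + 2) := by
          rw [div_le_div_iff₀ hfn1 (by positivity)]
          nlinarith
        have hfrac0 : (0:ℝ) ≤ f n / (1 + f n) := by positivity
        calc p n * (f n / (1 + f n)) ≤ (1 / ((n:ℝ) + 1)) * (((n:ℝ)+1)/((n:ℝ)+2)) := by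
              apply mul_le_mul ih hfrac hfrac0 (by positivity)
          _ = 1 / ((n:ℝ) + 2) := by
              field_simp
          _ = 1 / (((n:ℕ)+1 : ℕ) + 1) := by push_cast; ring
    have hppos : ∀ n, (0:ℝ) < p n := by
      intro n
      exact Finset.prod_pos fun i _ => div_pos (hfpos i) (hf1 i)
    have hM0 : (0:ℝ) ≤ M := le_trans (abs_nonneg _) (hM 0)
    have hhten : Tendsto h atTop (𝓝 0) := by
      have hbound : ∀ n, ‖h n‖ ≤ (2 * M) * (1 / ((n:ℝ) + 1)) := by
        intro n
        have : ‖h n‖ = p n * |g 0 - g n| := by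
          rw [hh]
          simp only [Real.norm_eq_abs, abs_mul, abs_of_pos (hppos n)]
        rw [this]
        have h1 : |g 0 - g n| ≤ 2 * M := by
          have := abs_sub_abs_le_abs_sub (g 0) (g n)
          have h2 := abs_sub (g 0) (g n)
          calc |g 0 - g n| ≤ |g 0| + |g n| := abs_sub _ _
            _ ≤ M + M := add_le_add (hM 0) (hM n)
            _ = 2 * M := by ring
        calc p n * |g 0 - g n| ≤ (1/((n:ℝ)+1)) * (2*M) :=
              mul_le_mul (hple n) h1 (abs_nonneg _) (by positivity)
          _ = (2*M) * (1/((n:ℝ)+1)) := by ring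
      have htend : Tendsto (fun n : ℕ => (2 * M) * (1 / ((n:ℝ) + 1))) atTop (𝓝 0) := by
        have := tendsto_one_div_add_atTop_nhds_zero_nat.const_mul (2*M)
        simpa using this
      exact squeeze_zero_norm hbound htend
    have hS := hsum.hasSum
    have hten := hS.tendsto_sum_nat
    have hps : ∀ n, ∑ i ∈ Finset.range n, muk f i * (f i * (g (i + 1) - g i) + g 0 - g i)
        = h 0 - h n := by
      intro n
      rw [Finset.sum_congr rfl (fun i _ => ht i)]
      exact Finset.sum_range_sub' h n
    have hh0 : h 0 = 0 := by simp [hh]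
    have hten2 : Tendsto (fun n => ∑ i ∈ Finset.range n,
        muk f i * (f i * (g (i + 1) - g i) + g 0 - g i)) atTop (𝓝 0) := by
      simp only [hps, hh0, zero_sub]
      simpa using hhten.neg
    exact tendsto_nhds_unique hten hten2
  · exact tsum_eq_zero_of_not_summable hsum
end

section
/- Let W be an ℕ₀-valued random variable such that E[f(W)(g(W+1)-g(W)) + g(0) - g(W)] = 0 for all bounded functions g : ℕ₀ → ℝ. Then W has distribution μ, i.e., P(W = k) = (1/(1+f(k))) ∏_{i=0}^{k-1} f(i)/(1+f(i)) for all k. -/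
open Finset MeasureTheory ProbabilityTheory

/-- if an `ℕ`-valued random variable `W` satisfies
`E[f(W)(g(W+1)-g(W)) + g 0 - g(W)] = 0` for all bounded `g`, then `W ~ μ`. -/
theorem stein_characterizes_mu {Ω : Type*} [MeasureSpace Ω]
    [IsProbabilityMeasure (ℙ : Measure Ω)]
    (f : ℕ → ℝ) (hfpos : ∀ k, 0 < f k) (hfle : ∀ k, f k ≤ (k : ℝ) + 1)
    (W : Ω → ℕ) (hW : Measurable W)
    (hstein : ∀ g : ℕ → ℝ, (∃ M, ∀ k, |g k| ≤ M) →
      ∫ ω : Ω, (f (W ω) * (g (W ω + 1) - g (W ω)) + g 0 - g (W ω)) ∂ℙ = 0) :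
    ∀ k, (ℙ {ω | W ω = k}).toReal = muk f k := by
  have hmeas : ∀ ℓ : ℕ, MeasurableSet {ω : Ω | W ω = ℓ} :=
    fun ℓ => hW (measurableSet_singleton ℓ)
  set p : ℕ → ℝ := fun ℓ => (ℙ {ω : Ω | W ω = ℓ}).toReal with hp
  have key : ∀ (ℓ : ℕ) (c : ℝ),
      ∫ ω : Ω, ({ω : Ω | W ω = ℓ}).indicator (fun _ => c) ω ∂ℙ = c * p ℓ := by
    intro ℓ c
    rw [integral_indicator_const c (hmeas ℓ)]
    simp [hp, mul_comm, measureReal_def]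
  have hpos : ∀ k, (0:ℝ) < 1 + f k := fun k => by linarith [hfpos k]
  intro k
  induction k with
  | zero =>
    have h0 := hstein (fun n => if n = 0 then 1 else 0)
      ⟨1, by intro k; split <;> norm_num⟩
    have heq : (fun ω : Ω => f (W ω) * ((if W ω + 1 = 0 then (1:ℝ) else 0) -
          if W ω = 0 then 1 else 0) + (if (0:ℕ) = 0 then (1:ℝ) else 0) -
          if W ω = 0 then (1:ℝ) else 0)
        = fun ω : Ω => (1:ℝ) - ({ω : Ω | W ω = 0}).indicator (fun _ => 1 + f 0) ω := by
      funext ω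
      by_cases h : W ω = 0 <;> simp [Set.indicator, h] <;> try ring
    rw [heq, integral_sub (integrable_const 1)
      ((integrable_const _).indicator (hmeas 0)), integral_const, key] at h0
    simp only [probReal_univ, ENNReal.toReal_one, smul_eq_mul, one_mul] at h0
    have hq : p 0 = 1 / (1 + f 0) := by
      rw [eq_div_iff (hpos 0).ne']
      linear_combination -h0
    show p 0 = muk f 0
    simp [muk, hq]
  | succ m ih =>
    have h1 := hstein (fun n => if n = m + 1 then 1 else 0)
      ⟨1, by intro k; split <;> norm_num⟩
    have heq : (fun ω : Ω => f (W ω) * ((if W ω + 1 = m + 1 then (1:ℝ) else 0) -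
          if W ω = m + 1 then 1 else 0) + (if (0:ℕ) = m + 1 then (1:ℝ) else 0) -
          if W ω = m + 1 then (1:ℝ) else 0)
        = fun ω : Ω => ({ω : Ω | W ω = m}).indicator (fun _ => f m) ω -
            ({ω : Ω | W ω = m + 1}).indicator (fun _ => f (m + 1) + 1) ω := by
      funext ω
      by_cases h : W ω = m
      · simp [Set.indicator, h]
      · by_cases h2 : W ω = m + 1 <;> simp [Set.indicator, h, h2] <;> ring
    rw [heq, integral_sub ((integrable_const _).indicator (hmeas m))
      ((integrable_const _).indicator (hmeas (m+1))), key, key] at h1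
    have hne := (hpos (m+1)).ne'
    have hstep : p (m + 1) = f m * p m / (1 + f (m + 1)) := by
      rw [eq_div_iff hne]
      linear_combination -h1
    show p (m + 1) = muk f (m + 1)
    rw [hstep]
    have ih' : p m = muk f m := ih
    rw [ih']
    simp only [muk, Finset.prod_range_succ]
    have h1 := (hpos m).ne'
    have h2 := (hpos (m+1)).ne'
    field_simp
end

section
/- Let (X_n)_{n≥1} be the Markov chain on ℕ₀ with X_1 = 0 and transitions: from state i at time n, move to i+1 with probability f(i)/(n+1), return to 0 with probability 1/(n+1) (if i ≥ 1), and stay at i otherwise (with the modification at i = 0 that it moves to 1 with probability f(0)/(n+1) and stays at 0 otherwise). Then for any bounded h : ℕ₀ → ℝ with h(0) = 0 and all n ≥ 1: E[h(X_{n+1})] = (1/(n+1)) ∑_{ℓ=1}^{n} E[f(X_ℓ)(h(X_ℓ+1) - h(X_ℓ))]. -/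
open Finset

/-- `ChainLaw f p` says that `p ℓ k = P(X_ℓ = k)` is the law of the Markov chain
`(X_ℓ)_{ℓ ≥ 1}` with `X_1 = 0` and time-inhomogeneous transitions: from state
`i` at time `n`, move to `i+1` with probability `f i/(n+1)`, return to `0` with
probability `1/(n+1)` if `i ≥ 1` (so that it stays at `i` with probability
`(n - f i)/(n+1)`), and, from `i = 0`, move to `1` with probability `f 0/(n+1)`
and stay at `0` otherwise.  (The chain has total mass one, so the probability
of being at `0` at time `n+1` is
`p n 0 (n+1-f 0)/(n+1) + (∑_{i ≥ 1} p n i)/(n+1) = p n 0 (n+1-f 0)/(n+1) + (1 - p n 0)/(n+1)`.) -/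
def ChainLaw (f : ℕ → ℝ) (p : ℕ → ℕ → ℝ) : Prop :=
  (∀ k, p 1 k = if k = 0 then 1 else 0) ∧
  (∀ n, 1 ≤ n →
    p (n + 1) 0 = p n 0 * (((n : ℝ) + 1 - f 0) / ((n : ℝ) + 1))
      + (1 - p n 0) * (1 / ((n : ℝ) + 1))) ∧
  (∀ n, 1 ≤ n → ∀ j, 1 ≤ j →
    p (n + 1) j = p n (j - 1) * (f (j - 1) / ((n : ℝ) + 1))
      + p n j * (((n : ℝ) - f j) / ((n : ℝ) + 1)))

/-- `Hk f p k ℓ = f k P(X_ℓ = k) - P(X_ℓ ≥ k+1)`; since `X_ℓ ≤ ℓ - 1` a.s.,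
`P(X_ℓ ≥ k+1) = ∑_{j=k+1}^{ℓ-1} p ℓ j`. -/
def Hk (f : ℕ → ℝ) (p : ℕ → ℕ → ℝ) (k ℓ : ℕ) : ℝ :=
  f k * p ℓ k - ∑ j ∈ Finset.Ico (k + 1) ℓ, p ℓ j

lemma chain_vanish (f : ℕ → ℝ) (p : ℕ → ℕ → ℝ) (hp : ChainLaw f p) :
    ∀ ℓ, 1 ≤ ℓ → ∀ j, ℓ ≤ j → p ℓ j = 0 := by
  intro ℓ hℓ
  induction ℓ, hℓ using Nat.le_induction with
  | base =>
    intro j hj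
    rw [hp.1 j, if_neg (by omega)]
  | succ m hm ih =>
    intro j hj
    rw [hp.2.2 m hm j (by omega), ih (j-1) (by omega), ih j (by omega)]
    ring

/-- for any bounded `h` with `h 0 = 0` and any `n ≥ 1`,
`E[h(X_{n+1})] = (1/(n+1)) ∑_{ℓ=1}^n E[f(X_ℓ)(h(X_ℓ+1) - h(X_ℓ))]`
(expectations written using that `X_ℓ ∈ {0, …, ℓ-1}` a.s.). -/
theorem expectation_recursion (f : ℕ → ℝ) (hfpos : ∀ k, 0 < f k)
    (hfle : ∀ k, f k ≤ (k : ℝ) + 1) (p : ℕ → ℕ → ℝ) (hp : ChainLaw f p)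
    (h : ℕ → ℝ) (hbdd : ∃ M, ∀ k, |h k| ≤ M) (h0 : h 0 = 0)
    (n : ℕ) (hn : 1 ≤ n) :
    ∑ k ∈ Finset.range (n + 1), p (n + 1) k * h k
      = (1 / ((n : ℝ) + 1)) * ∑ ℓ ∈ Finset.Icc 1 n,
          ∑ k ∈ Finset.range ℓ, p ℓ k * (f k * (h (k + 1) - h k)) := by
  have vanish := chain_vanish f p hp
  have key : ∀ n : ℕ, 1 ≤ n →
      ((n : ℝ) + 1) * ∑ k ∈ Finset.range (n + 1), p (n + 1) k * h k
        = ∑ ℓ ∈ Finset.Icc 1 n,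
            ∑ k ∈ Finset.range ℓ, p ℓ k * (f k * (h (k + 1) - h k)) := by
    intro n hn
    induction n, hn using Nat.le_induction with
    | base =>
      have h21 : p 2 1 = p 1 0 * (f 0 / ((1:ℝ) + 1))
          + p 1 1 * (((1:ℝ) - f 1) / ((1:ℝ) + 1)) := by
        have := hp.2.2 1 le_rfl 1 le_rfl
        simpa using this
      have h10 : p 1 0 = 1 := by rw [hp.1 0]; simp
      have h11 : p 1 1 = 0 := by rw [hp.1 1]; simp
      simp only [Finset.Icc_self, Finset.sum_singleton]
      rw [show (1:ℕ) + 1 = 2 from rfl]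
      rw [Finset.sum_range_succ, Finset.sum_range_succ, Finset.sum_range_zero,
        Finset.sum_range_one, h21, h10, h11, h0]
      push_cast
      ring
    | succ n hn ih =>
      have hne : ((n : ℝ) + 1 + 1) ≠ 0 := by positivity
      have hstep : ∀ j : ℕ, p (n + 1 + 1) (j + 1)
          = p (n + 1) j * (f j / ((n : ℝ) + 1 + 1))
            + p (n + 1) (j + 1) * ((((n : ℝ) + 1) - f (j + 1)) / ((n : ℝ) + 1 + 1)) := by
        intro j
        have := hp.2.2 (n + 1) (by omega) (j + 1) (by omega)
        push_cast at this
        simpa using this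
      rw [Finset.sum_Icc_succ_top (by omega : (1:ℕ) ≤ n + 1), ← ih]
      rw [Finset.sum_range_succ' (fun k => p (n + 1 + 1) k * h k) (n + 1)]
      simp only [h0, mul_zero, add_zero]
      push_cast
      rw [Finset.mul_sum]
      have lhs_eq : ∑ j ∈ Finset.range (n + 1),
            ((n : ℝ) + 1 + 1) * (p (n + 1 + 1) (j + 1) * h (j + 1))
          = ∑ j ∈ Finset.range (n + 1),
              (p (n + 1) j * f j + p (n + 1) (j + 1) * (((n : ℝ) + 1) - f (j + 1)))
                * h (j + 1) := by
        refine Finset.sum_congr rfl fun j _ => ?_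
        rw [hstep j]
        field_simp
      rw [lhs_eq]
      have split : ∑ j ∈ Finset.range (n + 1),
            (p (n + 1) j * f j + p (n + 1) (j + 1) * (((n : ℝ) + 1) - f (j + 1)))
              * h (j + 1)
          = (∑ j ∈ Finset.range (n + 1), p (n + 1) j * f j * h (j + 1))
            + ∑ j ∈ Finset.range (n + 1),
                p (n + 1) (j + 1) * (((n : ℝ) + 1) - f (j + 1)) * h (j + 1) := by
        rw [← Finset.sum_add_distrib]
        exact Finset.sum_congr rfl fun j _ => by ring
      rw [split]
      have shift : ∑ j ∈ Finset.range (n + 1),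
            p (n + 1) (j + 1) * (((n : ℝ) + 1) - f (j + 1)) * h (j + 1)
          = ∑ k ∈ Finset.range (n + 1),
              p (n + 1) k * (((n : ℝ) + 1) - f k) * h k := by
        have e1 := Finset.sum_range_succ'
          (fun k => p (n + 1) k * (((n : ℝ) + 1) - f k) * h k) (n + 1)
        have e2 := Finset.sum_range_succ
          (fun k => p (n + 1) k * (((n : ℝ) + 1) - f k) * h k) (n + 1)
        have hv : p (n + 1) (n + 1) = 0 := vanish (n + 1) (by omega) (n + 1) le_rfl
        simp only [h0, mul_zero, add_zero, hv, zero_mul] at e1 e2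
        rw [← e1, e2]
      rw [shift, ← Finset.sum_add_distrib, Finset.mul_sum, ← Finset.sum_add_distrib]
      exact Finset.sum_congr rfl fun k _ => by ring
  have hne : ((n : ℝ) + 1) ≠ 0 := by positivity
  rw [← key n hn, one_div, inv_mul_cancel_left₀ hne]
end

section
/- Let (X_ℓ) be the Markov chain from the general preferential attachment degree evolution (X_1 = 0; from state i at time ℓ it moves to i+1 w.p. f(i)/(ℓ+1), to 0 w.p. 1/(ℓ+1) if i ≥ 1, else stays), and define h(k,ℓ) = f(k)P(X_ℓ = k) - P(X_ℓ ≥ k+1). Then h(k,ℓ) = 0 for all k ≥ ℓ, and for all ℓ ≥ 1, k ≥ 0: h(k, ℓ+1) = ((ℓ - f(k))/(ℓ+1)) h(k,ℓ) + (f(k)/(ℓ+1)) h(k-1,ℓ), with the convention h(-1,ℓ) = 0. -/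
open Finset

lemma pzero (f : ℕ → ℝ) (p : ℕ → ℕ → ℝ) (hp : ChainLaw f p) :
    ∀ n, 1 ≤ n → ∀ k, n ≤ k → p n k = 0 := by
  intro n
  induction n with
  | zero => omega
  | succ m ih =>
    intro _ k hk
    by_cases hm : m = 0
    · subst hm
      rw [hp.1 k, if_neg (by omega)]
    · have hm1 : 1 ≤ m := by omega
      rw [hp.2.2 m hm1 k (by omega), ih hm1 (k-1) (by omega), ih hm1 k (by omega)]
      ring

lemma sumIco_split (g : ℕ → ℝ) (n k : ℕ) (hg : n ≤ k → g k = 0) :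
    ∑ j ∈ Ico k n, g j = g k + ∑ j ∈ Ico (k+1) n, g j := by
  by_cases h : k < n
  · rw [Finset.sum_eq_sum_Ico_succ_bot h]
  · rw [Finset.Ico_eq_empty (by omega), Finset.Ico_eq_empty (by omega), hg (by omega)]
    simp

lemma Slemma (f : ℕ → ℝ) (p : ℕ → ℕ → ℝ) (hp : ChainLaw f p) (n : ℕ) (hn : 1 ≤ n) (k : ℕ) :
    ∑ j ∈ Ico (k+1) (n+1), p (n+1) j
      = (f k * p n k + (n:ℝ) * ∑ j ∈ Ico (k+1) n, p n j) / ((n:ℝ)+1) := by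
  have h1 : ∑ j ∈ Ico (k+1) (n+1), p (n+1) j
      = ∑ j ∈ Ico (k+1) (n+1),
          (p n (j-1) * (f (j-1) / ((n:ℝ)+1)) + p n j * (((n:ℝ) - f j)/((n:ℝ)+1))) :=
    Finset.sum_congr rfl (fun j hj =>
      hp.2.2 n hn j (by have := (Finset.mem_Ico.mp hj).1; omega))
  rw [h1, Finset.sum_add_distrib]
  have hA : ∑ j ∈ Ico (k+1) (n+1), p n (j-1) * (f (j-1)/((n:ℝ)+1))
      = ∑ j ∈ Ico k n, p n j * (f j/((n:ℝ)+1)) := by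
    rw [Finset.sum_Ico_eq_sum_range, Finset.sum_Ico_eq_sum_range]
    have h2 : n + 1 - (k + 1) = n - k := by omega
    rw [h2]
    refine Finset.sum_congr rfl (fun i _ => ?_)
    have h3 : k + 1 + i - 1 = k + i := by omega
    rw [h3]
  have hB : ∑ j ∈ Ico (k+1) (n+1), p n j * (((n:ℝ) - f j)/((n:ℝ)+1))
      = ∑ j ∈ Ico (k+1) n, p n j * (((n:ℝ) - f j)/((n:ℝ)+1)) := by
    refine (Finset.sum_subset (Finset.Ico_subset_Ico_right (by omega)) ?_).symm
    intro x hx hnx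
    rw [Finset.mem_Ico] at hx
    rw [Finset.mem_Ico] at hnx
    rw [pzero f p hp n hn x (by omega)]
    ring
  have hsplit : ∑ j ∈ Ico k n, p n j * (f j/((n:ℝ)+1))
      = p n k * (f k/((n:ℝ)+1)) + ∑ j ∈ Ico (k+1) n, p n j * (f j/((n:ℝ)+1)) :=
    sumIco_split (fun j => p n j * (f j/((n:ℝ)+1))) n k
      (fun h => by beta_reduce; rw [pzero f p hp n hn k h]; ring)
  rw [hA, hB, hsplit]
  have hC : ∑ j ∈ Ico (k+1) n, p n j * (f j/((n:ℝ)+1))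
      + ∑ j ∈ Ico (k+1) n, p n j * (((n:ℝ) - f j)/((n:ℝ)+1))
      = ((n:ℝ)/((n:ℝ)+1)) * ∑ j ∈ Ico (k+1) n, p n j := by
    rw [← Finset.sum_add_distrib, Finset.mul_sum]
    refine Finset.sum_congr rfl (fun j _ => ?_)
    have hne : ((n:ℝ)+1) ≠ 0 := by positivity
    field_simp
    ring
  have hne : ((n:ℝ)+1) ≠ 0 := by positivity
  rw [add_assoc, hC]
  field_simp

lemma mass (f : ℕ → ℝ) (p : ℕ → ℕ → ℝ) (hp : ChainLaw f p) :
    ∀ n, 1 ≤ n → ∑ j ∈ Finset.range n, p n j = 1 := by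
  intro n
  induction n with
  | zero => omega
  | succ m ih =>
    intro _
    by_cases hm : m = 0
    · subst hm; simp [hp.1 0]
    · have hm1 : 1 ≤ m := by omega
      have hSig : ∑ j ∈ Ico (0+1) m, p m j = 1 - p m 0 := by
        have h0 := ih hm1
        rw [Finset.range_eq_Ico, sumIco_split (p m) m 0 (fun h => by omega)] at h0
        linarith
      rw [Finset.range_eq_Ico,
        sumIco_split (p (m+1)) (m+1) 0 (fun h => by omega),
        hp.2.1 m hm1, Slemma f p hp m hm1 0, hSig]
      have hne : ((m:ℝ)+1) ≠ 0 := by positivity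
      field_simp
      ring

/-- `h(k,ℓ) = 0` for `k ≥ ℓ`, and the recursion
`h(k,ℓ+1) = ((ℓ - f k)/(ℓ+1)) h(k,ℓ) + (f k/(ℓ+1)) h(k-1,ℓ)` holds for all
`ℓ ≥ 1`, `k ≥ 0`, with the convention `h(-1,ℓ) = 0`. -/
theorem Hk_recursion (f : ℕ → ℝ) (hfpos : ∀ k, 0 < f k)
    (hfle : ∀ k, f k ≤ (k : ℝ) + 1) (p : ℕ → ℕ → ℝ) (hp : ChainLaw f p) :
    (∀ k ℓ, 1 ≤ ℓ → ℓ ≤ k → Hk f p k ℓ = 0) ∧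
    (∀ ℓ, 1 ≤ ℓ → ∀ k,
      Hk f p k (ℓ + 1)
        = (((ℓ : ℝ) - f k) / ((ℓ : ℝ) + 1)) * Hk f p k ℓ
          + (f k / ((ℓ : ℝ) + 1)) * (if k = 0 then 0 else Hk f p (k - 1) ℓ)) := by
  constructor
  · intro k ℓ h1 h2
    unfold Hk
    rw [pzero f p hp ℓ h1 k h2, Finset.Ico_eq_empty (by omega)]
    simp
  · intro n hn k
    have hne : ((n:ℝ)+1) ≠ 0 := by positivity
    rcases k with _ | j
    · rw [if_pos rfl]
      unfold Hk
      have hSig : ∑ j ∈ Ico (0+1) n, p n j = 1 - p n 0 := by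
        have h0 := mass f p hp n hn
        rw [Finset.range_eq_Ico, sumIco_split (p n) n 0 (fun h => by omega)] at h0
        linarith
      rw [hp.2.1 n hn, Slemma f p hp n hn 0, hSig]
      field_simp
      ring
    · rw [if_neg (by omega)]
      unfold Hk
      have hsplit := sumIco_split (p n) n (j+1) (fun h => pzero f p hp n hn (j+1) h)
      rw [Slemma f p hp n hn (j+1), hp.2.2 n hn (j+1) (by omega),
        show (j+1) - 1 = j from rfl, hsplit]
      field_simp
      ring
end

section
/- With h(k,ℓ) = f(k)P(X_ℓ = k) - P(X_ℓ ≥ k+1) as above, and assuming 0 < f(k) ≤ k+1 for all k, we have h(k,ℓ) ≥ 0 for all k ∈ ℕ₀ and ℓ ≥ 1. -/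
open Finset

section Aux

variable {f : ℕ → ℝ} {p : ℕ → ℕ → ℝ}

lemma aux_shift (g : ℕ → ℝ) (a n : ℕ) :
    ∑ j ∈ Finset.Ico (a + 1) (n + 1), g (j - 1) = ∑ j ∈ Finset.Ico a n, g j := by
  rw [Finset.sum_Ico_eq_sum_range, Finset.sum_Ico_eq_sum_range]
  have h : n + 1 - (a + 1) = n - a := by omega
  rw [h]
  refine Finset.sum_congr rfl fun i _ => ?_
  congr 1
  omega

lemma aux_support (hp : ChainLaw f p) : ∀ n, 1 ≤ n → ∀ k, n ≤ k → p n k = 0 := by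
  obtain ⟨h1, h0, hj⟩ := hp
  intro n
  induction n with
  | zero => omega
  | succ n ih =>
    intro _ k hk
    rcases Nat.eq_zero_or_pos n with rfl | hn
    · rw [h1 k, if_neg (by omega)]
    · rw [hj n hn k (by omega), ih hn (k - 1) (by omega), ih hn k (by omega)]
      ring

lemma aux_step (hp : ChainLaw f p) (n k : ℕ) (hn : 1 ≤ n) (hk : k < n) :
    ∑ j ∈ Finset.Ico (k + 1) (n + 1), p (n + 1) j
      = (∑ j ∈ Finset.Ico k n, p n j * f j) / ((n : ℝ) + 1)
        + (∑ j ∈ Finset.Ico (k + 1) n, p n j * ((n : ℝ) - f j)) / ((n : ℝ) + 1) := by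
  obtain ⟨h1, h0, hj⟩ := hp
  have hrw : ∀ j ∈ Finset.Ico (k + 1) (n + 1), p (n + 1) j
      = p n (j - 1) * (f (j - 1) / ((n : ℝ) + 1))
        + p n j * (((n : ℝ) - f j) / ((n : ℝ) + 1)) := fun j hjj =>
    hj n hn j (le_trans (by omega) (Finset.mem_Ico.mp hjj).1)
  rw [Finset.sum_congr rfl hrw, Finset.sum_add_distrib]
  have e1 : ∑ j ∈ Finset.Ico (k + 1) (n + 1), p n (j - 1) * (f (j - 1) / ((n : ℝ) + 1))
      = ∑ j ∈ Finset.Ico k n, p n j * (f j / ((n : ℝ) + 1)) :=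
    aux_shift (fun j => p n j * (f j / ((n : ℝ) + 1))) k n
  have e2 : ∑ j ∈ Finset.Ico (k + 1) (n + 1), p n j * (((n : ℝ) - f j) / ((n : ℝ) + 1))
      = ∑ j ∈ Finset.Ico (k + 1) n, p n j * (((n : ℝ) - f j) / ((n : ℝ) + 1)) := by
    rw [Finset.sum_Ico_succ_top (by omega), aux_support ⟨h1, h0, hj⟩ n hn n le_rfl]
    ring
  rw [e1, e2, Finset.sum_div, Finset.sum_div]
  congr 1 <;> exact Finset.sum_congr rfl fun j _ => by ring

lemma aux_mass (hp : ChainLaw f p) : ∀ n, 1 ≤ n → ∑ j ∈ Finset.range n, p n j = 1 := by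
  obtain ⟨h1, h0, hj⟩ := hp
  intro n
  induction n with
  | zero => omega
  | succ n ih =>
    intro _
    rcases Nat.eq_zero_or_pos n with rfl | hn
    · simp [h1]
    have hpos : ((n : ℝ) + 1) ≠ 0 := by positivity
    rw [Finset.range_eq_Ico, Finset.sum_eq_sum_Ico_succ_bot (by omega),
      aux_step ⟨h1, h0, hj⟩ n 0 hn hn, h0 n hn]
    have hbot : ∑ j ∈ Finset.Ico 0 n, p n j * f j
        = p n 0 * f 0 + ∑ j ∈ Finset.Ico 1 n, p n j * f j := by
      rw [Finset.sum_eq_sum_Ico_succ_bot (by omega)]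
    have htop : ∑ j ∈ Finset.Ico 1 n, p n j * ((n : ℝ) - f j)
        = (n : ℝ) * (∑ j ∈ Finset.Ico 1 n, p n j)
          - ∑ j ∈ Finset.Ico 1 n, p n j * f j := by
      rw [Finset.mul_sum, ← Finset.sum_sub_distrib]
      exact Finset.sum_congr rfl fun j _ => by ring
    have hS : ∑ j ∈ Finset.Ico 1 n, p n j = 1 - p n 0 := by
      have := ih hn
      rw [Finset.range_eq_Ico, Finset.sum_eq_sum_Ico_succ_bot (by omega)] at this
      linarith
    rw [hbot, htop, hS]
    field_simp
    ring

lemma aux_nonneg (hfpos : ∀ k, 0 < f k) (hfle : ∀ k, f k ≤ (k : ℝ) + 1)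
    (hp : ChainLaw f p) : ∀ n, 1 ≤ n → ∀ k, 0 ≤ p n k := by
  obtain ⟨h1, h0, hj⟩ := hp
  intro n
  induction n with
  | zero => omega
  | succ n ih =>
    intro _ k
    rcases Nat.eq_zero_or_pos n with rfl | hn
    · rw [h1 k]; split <;> norm_num
    have hpos : (0 : ℝ) < (n : ℝ) + 1 := by positivity
    rcases Nat.eq_zero_or_pos k with rfl | hk
    · rw [h0 n hn]
      have h00 : 0 ≤ p n 0 := ih hn 0
      have hS : ∑ j ∈ Finset.Ico 1 n, p n j = 1 - p n 0 := by
        have := aux_mass ⟨h1, h0, hj⟩ n hn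
        rw [Finset.range_eq_Ico, Finset.sum_eq_sum_Ico_succ_bot (by omega)] at this
        linarith
      have hS0 : 0 ≤ 1 - p n 0 := by
        rw [← hS]
        exact Finset.sum_nonneg fun j _ => ih hn j
      have hf0 : f 0 ≤ 1 := by simpa using hfle 0
      have : (0:ℝ) ≤ (n : ℝ) + 1 - f 0 := by linarith
      positivity
    · rw [hj n hn k hk]
      rcases lt_or_ge k n with hkn | hkn
      · have h1' : 0 ≤ p n (k - 1) := ih hn (k - 1)
        have h2' : 0 ≤ p n k := ih hn k
        have hfk : f k ≤ (n : ℝ) := by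
          have := hfle k
          have : (k : ℝ) + 1 ≤ (n : ℝ) := by exact_mod_cast hkn
          linarith [hfle k]
        have hfk1 : 0 ≤ f (k - 1) := (hfpos (k - 1)).le
        have : (0:ℝ) ≤ (n:ℝ) - f k := by linarith
        positivity
      · rw [aux_support ⟨h1, h0, hj⟩ n hn k hkn]
        have h1' : 0 ≤ p n (k - 1) := ih hn (k - 1)
        have hfk1 : 0 ≤ f (k - 1) := (hfpos (k - 1)).le
        rw [zero_mul, add_zero]
        exact mul_nonneg h1' (div_nonneg hfk1 hpos.le)

lemma aux_rec0 (hp : ChainLaw f p) (n : ℕ) (hn : 1 ≤ n) :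
    Hk f p 0 (n + 1) = (((n : ℝ) - f 0) / ((n : ℝ) + 1)) * Hk f p 0 n := by
  obtain ⟨h1, h0, hj⟩ := hp
  have hpos : ((n : ℝ) + 1) ≠ 0 := by positivity
  unfold Hk
  rw [aux_step ⟨h1, h0, hj⟩ n 0 hn hn, h0 n hn]
  have hbot : ∑ j ∈ Finset.Ico 0 n, p n j * f j
      = p n 0 * f 0 + ∑ j ∈ Finset.Ico 1 n, p n j * f j := by
    rw [Finset.sum_eq_sum_Ico_succ_bot (by omega)]
  have htop : ∑ j ∈ Finset.Ico 1 n, p n j * ((n : ℝ) - f j)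
      = (n : ℝ) * (∑ j ∈ Finset.Ico 1 n, p n j)
        - ∑ j ∈ Finset.Ico 1 n, p n j * f j := by
    rw [Finset.mul_sum, ← Finset.sum_sub_distrib]
    exact Finset.sum_congr rfl fun j _ => by ring
  have hS : ∑ j ∈ Finset.Ico 1 n, p n j = 1 - p n 0 := by
    have := aux_mass ⟨h1, h0, hj⟩ n hn
    rw [Finset.range_eq_Ico, Finset.sum_eq_sum_Ico_succ_bot (by omega)] at this
    linarith
  rw [hbot, htop, hS]
  field_simp
  ring

lemma aux_rec (hp : ChainLaw f p) (n m : ℕ) (hn : 1 ≤ n) (hk : m + 1 < n) :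
    Hk f p (m + 1) (n + 1)
      = (((n : ℝ) - f (m + 1)) / ((n : ℝ) + 1)) * Hk f p (m + 1) n
        + (f (m + 1) / ((n : ℝ) + 1)) * Hk f p m n := by
  obtain ⟨h1, h0, hj⟩ := hp
  have hpos : ((n : ℝ) + 1) ≠ 0 := by positivity
  unfold Hk
  rw [aux_step ⟨h1, h0, hj⟩ n (m + 1) hn (by omega),
    hj n hn (m + 1) (by omega)]
  simp only [Nat.add_sub_cancel]
  have hbot : ∑ j ∈ Finset.Ico (m + 1) n, p n j * f j
      = p n (m + 1) * f (m + 1) + ∑ j ∈ Finset.Ico (m + 2) n, p n j * f j := by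
    rw [Finset.sum_eq_sum_Ico_succ_bot (by omega)]
  have hbot2 : ∑ j ∈ Finset.Ico (m + 1) n, p n j
      = p n (m + 1) + ∑ j ∈ Finset.Ico (m + 2) n, p n j := by
    rw [Finset.sum_eq_sum_Ico_succ_bot (by omega)]
  have htop : ∑ j ∈ Finset.Ico (m + 2) n, p n j * ((n : ℝ) - f j)
      = (n : ℝ) * (∑ j ∈ Finset.Ico (m + 2) n, p n j)
        - ∑ j ∈ Finset.Ico (m + 2) n, p n j * f j := by
    rw [Finset.mul_sum, ← Finset.sum_sub_distrib]
    exact Finset.sum_congr rfl fun j _ => by ring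
  rw [hbot, hbot2, htop]
  field_simp
  ring

end Aux

/-- `h(k,ℓ) ≥ 0` for all `k ∈ ℕ` and `ℓ ≥ 1`. -/
theorem Hk_nonneg (f : ℕ → ℝ) (hfpos : ∀ k, 0 < f k)
    (hfle : ∀ k, f k ≤ (k : ℝ) + 1) (p : ℕ → ℕ → ℝ) (hp : ChainLaw f p) :
    ∀ k ℓ, 1 ≤ ℓ → 0 ≤ Hk f p k ℓ := by
  have key : ∀ ℓ, 1 ≤ ℓ → ∀ k, 0 ≤ Hk f p k ℓ := by
    intro ℓ
    induction ℓ with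
    | zero => omega
    | succ n ih =>
      intro _ k
      rcases Nat.eq_zero_or_pos n with rfl | hn
      · obtain ⟨h1, h0, hj⟩ := hp
        unfold Hk
        rw [h1 k, Finset.Ico_eq_empty (by omega), Finset.sum_empty]
        split
        · simpa using (hfpos k).le
        · simp
      have hpos : (0 : ℝ) < (n : ℝ) + 1 := by positivity
      rcases lt_or_ge k n with hkn | hkn
      · rcases Nat.eq_zero_or_pos k with rfl | hk
        · rw [aux_rec0 hp n hn]
          have hf0 : f 0 ≤ 1 := by simpa using hfle 0
          have hn1 : (1 : ℝ) ≤ (n : ℝ) := by exact_mod_cast hn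
          have h1 : (0:ℝ) ≤ (n : ℝ) - f 0 := by linarith
          have h2 := ih hn 0
          positivity
        · obtain ⟨m, rfl⟩ := Nat.exists_eq_add_of_le hk
          rw [Nat.add_comm 1 m] at *
          rw [aux_rec hp n m hn hkn]
          have hfm : f (m + 1) ≤ (n : ℝ) := by
            have h1 := hfle (m + 1)
            have h2 : ((m : ℝ) + 1) + 1 ≤ (n : ℝ) := by exact_mod_cast hkn
            push_cast at h1
            linarith
          have h1 : (0:ℝ) ≤ (n : ℝ) - f (m + 1) := by linarith
          have h2 := ih hn (m + 1)
          have h3 := ih hn m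
          have h4 := (hfpos (m + 1)).le
          positivity
      · rcases eq_or_lt_of_le hkn with rfl | hkn'
        · unfold Hk
          rw [Finset.Ico_eq_empty (by omega), Finset.sum_empty, sub_zero]
          exact mul_nonneg (hfpos n).le (aux_nonneg hfpos hfle hp (n + 1) (by omega) n)
        · unfold Hk
          rw [Finset.Ico_eq_empty (by omega), Finset.sum_empty, sub_zero,
            aux_support hp (n + 1) (by omega) k (by omega)]
          simp
  intro k ℓ hℓ
  exact key ℓ hℓ k
end

section
/- Assume there exists k* ∈ ℕ₀ with f(k) ≤ k for all k ≥ k* (and 0 < f(k) ≤ k+1 for all k). Set C = f(0)·max(1, max_{1 ≤ k ≤ k*} ∏_{i=1}^{k} f(i)/i). Then h(k,ℓ) ≤ C/ℓ for all ℓ ≥ 1 and all k ≤ ℓ-1, where h(k,ℓ) = f(k)P(X_ℓ=k) - P(X_ℓ ≥ k+1). -/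
open Finset

namespace HkAux

lemma shift_sum (g : ℕ → ℝ) (k n : ℕ) :
    ∑ j ∈ Ico (k+1) (n+1), g (j-1) = ∑ j ∈ Ico k n, g j := by
  rw [Finset.sum_Ico_eq_sum_range, Finset.sum_Ico_eq_sum_range]
  have h : n + 1 - (k + 1) = n - k := by omega
  rw [h]
  refine Finset.sum_congr rfl fun i _ => ?_
  congr 1
  omega

variable {f : ℕ → ℝ} {p : ℕ → ℕ → ℝ}

lemma vanish (hp : ChainLaw f p) : ∀ n, 1 ≤ n → ∀ j, n ≤ j → p n j = 0 := by
  intro n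
  induction n with
  | zero => intro h; exact absurd h (by omega)
  | succ n ih =>
    intro _ j hj
    rcases Nat.eq_zero_or_pos n with h0 | h1
    · subst h0
      rw [hp.1 j, if_neg (by omega)]
    · rw [hp.2.2 n h1 j (by omega), ih h1 (j-1) (by omega), ih h1 j (by omega)]
      ring

lemma sumrec (hp : ChainLaw f p) (n k : ℕ) (hn : 1 ≤ n) (hk : k < n) :
    ∑ j ∈ Ico (k+1) (n+1), p (n+1) j
      = (f k * p n k + (n : ℝ) * ∑ j ∈ Ico (k+1) n, p n j) / ((n : ℝ)+1) := by
  have hstep : ∀ j ∈ Ico (k+1) (n+1),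
      p (n+1) j = p n (j-1) * (f (j-1) / ((n:ℝ)+1))
        + p n j * (((n:ℝ) - f j) / ((n:ℝ)+1)) := by
    intro j hj
    exact hp.2.2 n hn j (by have := (mem_Ico.1 hj).1; omega)
  rw [Finset.sum_congr rfl hstep, Finset.sum_add_distrib]
  have hs := shift_sum (fun j => p n j * (f j / ((n:ℝ)+1))) k n
  rw [hs, Finset.sum_Ico_succ_top (by omega : k+1 ≤ n),
    vanish hp n hn n le_rfl, zero_mul, add_zero,
    Finset.sum_eq_sum_Ico_succ_bot hk, add_assoc, ← Finset.sum_add_distrib]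
  have hne : ((n:ℝ)+1) ≠ 0 := by positivity
  have hcong : ∀ j ∈ Ico (k+1) n,
      p n j * (f j/((n:ℝ)+1)) + p n j * (((n:ℝ) - f j)/((n:ℝ)+1))
        = p n j * ((n:ℝ)/((n:ℝ)+1)) := by
    intro j _; field_simp; ring
  rw [Finset.sum_congr rfl hcong, ← Finset.sum_mul]
  field_simp

lemma mass (hp : ChainLaw f p) : ∀ n, 1 ≤ n → ∑ j ∈ range n, p n j = 1 := by
  intro n
  induction n with
  | zero => intro h; exact absurd h (by omega)
  | succ n ih =>
    intro _
    rcases Nat.eq_zero_or_pos n with h0 | h1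
    · subst h0; simp [hp.1]
    · have hIco : ∑ j ∈ Ico 1 n, p n j = 1 - p n 0 := by
        have h := ih h1
        rw [Finset.range_eq_Ico, Finset.sum_eq_sum_Ico_succ_bot h1] at h
        linarith
      have hs := sumrec hp n 0 h1 h1
      norm_num at hs
      rw [hIco] at hs
      rw [Finset.range_eq_Ico, Finset.sum_eq_sum_Ico_succ_bot (by omega : 0 < n+1),
        hp.2.1 n h1, hs]
      have hne : ((n:ℝ)+1) ≠ 0 := by positivity
      field_simp
      ring

lemma top (hp : ChainLaw f p) :
    ∀ n, f n * p (n+1) n = f 0 / ((n:ℝ)+1) * ∏ i ∈ Icc 1 n, f i / (i:ℝ) := by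
  intro n
  induction n with
  | zero => simp [hp.1]
  | succ n ih =>
    have h1 := hp.2.2 (n+1) (by omega) (n+1) (by omega)
    simp only [Nat.add_sub_cancel] at h1
    rw [vanish hp (n+1) (by omega) (n+1) le_rfl, zero_mul, add_zero] at h1
    rw [Finset.prod_Icc_succ_top (by omega : 1 ≤ n+1), h1]
    have hne1 : ((n:ℝ)+1) ≠ 0 := by positivity
    have hne2 : ((n:ℝ)+2) ≠ 0 := by positivity
    have : f (n+1) * (p (n+1) n * (f n / ((n:ℝ)+1+1)))
        = (f (n+1)/((n:ℝ)+1+1)) * (f n * p (n+1) n) := by ring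
    push_cast
    rw [this, ih]
    field_simp


end HkAux

/-- if `f k ≤ k` for all `k ≥ k*` then, with
`C = f 0 · max(1, max_{1 ≤ m ≤ k*} ∏_{i=1}^m f i / i)` (the maximum over
`m ∈ {0, …, k*}`, the term `m = 0` giving the empty product `1`),
we have `h(k,ℓ) ≤ C/ℓ` for all `ℓ ≥ 1` and `k ≤ ℓ-1`. -/
theorem Hk_upper_bound (f : ℕ → ℝ) (hfpos : ∀ k, 0 < f k)
    (hfle : ∀ k, f k ≤ (k : ℝ) + 1) (p : ℕ → ℕ → ℝ) (hp : ChainLaw f p)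
    (kst : ℕ) (hkst : ∀ k, kst ≤ k → f k ≤ (k : ℝ)) :
    ∀ ℓ, 1 ≤ ℓ → ∀ k, k ≤ ℓ - 1 →
      Hk f p k ℓ ≤
        (f 0 * (Finset.Icc 0 kst).sup'
            (Finset.nonempty_Icc.mpr (Nat.zero_le kst))
            (fun m => ∏ i ∈ Finset.Icc 1 m, f i / (i : ℝ))) / (ℓ : ℝ) := by
  have hf0 := hfpos 0
  set M := (Finset.Icc 0 kst).sup' (Finset.nonempty_Icc.mpr (Nat.zero_le kst))
      (fun m => ∏ i ∈ Finset.Icc 1 m, f i / (i : ℝ)) with hMdef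
  have hM1 : (1:ℝ) ≤ M := by
    calc (1:ℝ) = ∏ i ∈ Finset.Icc 1 0, f i / (i : ℝ) := by simp
      _ ≤ M := Finset.le_sup' (f := fun m => ∏ i ∈ Finset.Icc 1 m, f i / (i : ℝ))
          (by simp : (0:ℕ) ∈ Finset.Icc 0 kst)
  have prodnn : ∀ m, (0:ℝ) ≤ ∏ i ∈ Icc 1 m, f i / (i:ℝ) := fun m =>
    Finset.prod_nonneg fun i _ => div_nonneg (hfpos i).le (by positivity)
  have prodle : ∀ m, ∏ i ∈ Icc 1 m, f i / (i:ℝ) ≤ M := by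
    intro m
    induction m with
    | zero => simpa using hM1
    | succ m ih =>
      by_cases hc : m + 1 ≤ kst
      · exact Finset.le_sup' (f := fun m => ∏ i ∈ Finset.Icc 1 m, f i / (i : ℝ))
          (by simp [Finset.mem_Icc]; omega : m + 1 ∈ Finset.Icc 0 kst)
      · rw [Finset.prod_Icc_succ_top (by omega : 1 ≤ m+1)]
        have hf : f (m+1) / ((m+1 : ℕ):ℝ) ≤ 1 := by
          rw [div_le_one (by positivity)]
          have := hkst (m+1) (by omega)
          push_cast at this ⊢
          linarith
        calc (∏ i ∈ Icc 1 m, f i / (i:ℝ)) * (f (m+1) / ((m+1:ℕ):ℝ))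
            ≤ ∏ i ∈ Icc 1 m, f i / (i:ℝ) := mul_le_of_le_one_right (prodnn m) hf
          _ ≤ M := ih
  have hC0 : (0:ℝ) ≤ f 0 * M := by nlinarith
  intro ℓ hℓ
  induction ℓ, hℓ using Nat.le_induction with
  | base =>
    intro k hk
    have hk0 : k = 0 := by omega
    subst hk0
    have hH : Hk f p 0 1 = f 0 := by simp [Hk, hp.1]
    rw [hH, Nat.cast_one, div_one]
    nlinarith
  | succ n hn IH =>
    intro k hk
    have hkn : k ≤ n := by omega
    have hnne : ((n:ℝ)) ≠ 0 := by
      have : (1:ℝ) ≤ (n:ℝ) := by exact_mod_cast hn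
      linarith
    have hnpos : (0:ℝ) < (n:ℝ) := by positivity
    rcases eq_or_lt_of_le hkn with hkeq | hklt
    · -- boundary k = n
      subst hkeq
      have hH : Hk f p k (k+1) = f 0 / ((k:ℝ)+1) * ∏ i ∈ Icc 1 k, f i / (i:ℝ) := by
        simp [Hk, HkAux.top hp k]
      rw [hH]
      have : f 0 / ((k:ℝ)+1) * ∏ i ∈ Icc 1 k, f i / (i:ℝ)
          ≤ f 0 / ((k:ℝ)+1) * M :=
        mul_le_mul_of_nonneg_left (prodle k) (by positivity)
      calc f 0 / ((k:ℝ)+1) * ∏ i ∈ Icc 1 k, f i / (i:ℝ)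
          ≤ f 0 / ((k:ℝ)+1) * M := this
        _ = f 0 * M / ((k+1:ℕ):ℝ) := by push_cast; ring
    · -- k < n
      have h1 : Hk f p k n ≤ f 0 * M / n := IH k (by omega)
      have hfk0 : (0:ℝ) ≤ f k := (hfpos k).le
      have hfkn : f k ≤ (n:ℝ) := by
        have h := hfle k
        have : ((k:ℝ)+1) ≤ (n:ℝ) := by exact_mod_cast hklt
        linarith
      have hne1 : ((n:ℝ)+1) ≠ 0 := by positivity
      have hkey : ((n:ℝ) - f k) * (f 0 * M / n) + f k * (f 0 * M / n) = f 0 * M := by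
        field_simp
        ring
      rcases Nat.eq_zero_or_pos k with hk0 | hk1
      · subst hk0
        have hs := HkAux.sumrec hp n 0 hn hklt
        norm_num at hs
        have hIco : ∑ j ∈ Ico 1 n, p n j = 1 - p n 0 := by
          have h := HkAux.mass hp n hn
          rw [Finset.range_eq_Ico, Finset.sum_eq_sum_Ico_succ_bot hklt] at h
          linarith
        have hid : Hk f p 0 (n+1) = (((n:ℝ) - f 0) * Hk f p 0 n) / ((n:ℝ)+1) := by
          simp only [Hk, zero_add]
          rw [hs, hIco, hp.2.1 n hn]
          field_simp
          ring
        rw [hid]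
        have hf0n : f 0 ≤ (n:ℝ) := by
          have h := hfle 0
          have h2 : (1:ℝ) ≤ (n:ℝ) := by exact_mod_cast hn
          push_cast at h
          linarith
        have e1 : ((n:ℝ) - f 0) * Hk f p 0 n ≤ ((n:ℝ) - f 0) * (f 0 * M / n) :=
          mul_le_mul_of_nonneg_left h1 (by linarith)
        have e2 : ((n:ℝ) - f 0) * (f 0 * M / n) ≤ f 0 * M := by
          have : ((n:ℝ) - f 0) * (f 0 * M / n) ≤ (n:ℝ) * (f 0 * M / n) :=
            mul_le_mul_of_nonneg_right (by linarith) (by positivity)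
          have heq : (n:ℝ) * (f 0 * M / n) = f 0 * M := by field_simp
          linarith
        have hfin : ((n:ℝ) - f 0) * Hk f p 0 n ≤ f 0 * M := le_trans e1 e2
        rw [div_le_div_iff₀ (by positivity) (by push_cast; positivity)]
        push_cast
        nlinarith
      · -- 1 ≤ k < n
        have h2 : Hk f p (k-1) n ≤ f 0 * M / n := IH (k-1) (by omega)
        have hkm : k - 1 + 1 = k := by omega
        have hrecP := hp.2.2 n hn k hk1
        have hs := HkAux.sumrec hp n k hn hklt
        have hid : Hk f p k (n+1)
            = (((n:ℝ) - f k) * Hk f p k n + f k * Hk f p (k-1) n) / ((n:ℝ)+1) := by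
          simp only [Hk]
          rw [hrecP, hs, hkm, Finset.sum_eq_sum_Ico_succ_bot hklt]
          field_simp
          ring
        rw [hid]
        have e1 : ((n:ℝ) - f k) * Hk f p k n ≤ ((n:ℝ) - f k) * (f 0 * M / n) :=
          mul_le_mul_of_nonneg_left h1 (by linarith)
        have e2 : f k * Hk f p (k-1) n ≤ f k * (f 0 * M / n) :=
          mul_le_mul_of_nonneg_left h2 hfk0
        rw [div_le_div_iff₀ (by positivity) (by push_cast; positivity)]
        push_cast
        nlinarith
end
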